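/- Let V be an infinite ground set and let k ≥ 2. Then for every finite m ∈ ℕ there does not exist a MAS function F from the multisets over V of cardinality at most k to ℝ^m. -/

import Mathlib

/-- Every sequence of vectors in `ℝ^m` has a subsequence along which every coordinate
is weakly monotone (increasing or decreasing). -/
lemma stmt6_aux (m : ℕ) (x : ℕ → Fin m → ℝ) :
    ∃ g : ℕ → ℕ, StrictMono g ∧ ∀ t : Fin m,
      (∀ i j, i < j → x (g i) t ≤ x (g j) t) ∨
      (∀ i j, i < j → x (g j) t ≤ x (g i) t) := by
  induction m with
  | zero => exact ⟨id, strictMono_id, fun t => t.elim0⟩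
  | succ n ih =>
    obtain ⟨g, hg, hgm⟩ := ih (fun i t => x i t.castSucc)
    obtain ⟨g₂, hES⟩ := @exists_increasing_or_nonincreasing_subseq ℝ (· ≤ ·) ⟨fun _ _ _ => le_trans⟩
      (fun i => x (g i) (Fin.last n))
    refine ⟨g ∘ g₂, hg.comp g₂.strictMono, fun t => ?_⟩
    refine Fin.lastCases ?_ ?_ t
    · rcases hES with h | h
      · exact Or.inl fun i j hij => h i j hij
      · exact Or.inr fun i j hij => le_of_not_ge (h i j hij)
    · intro t
      rcases hgm t with h | h
      · exact Or.inl fun i j hij => h _ _ (g₂.strictMono hij)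
      · exact Or.inr fun i j hij => h _ _ (g₂.strictMono hij)

/-- If the ground set `V` is infinite and `k ≥ 2`, then for every finite `m` there is
no MAS function `F : P_{≤k}(V) → ℝ^m`. -/
theorem stmt6 (V : Type*) [Infinite V] (k : ℕ) (hk : 2 ≤ k) (m : ℕ) :
    ¬ ∃ F : {S : Multiset V // Multiset.card S ≤ k} → Fin m → ℝ,
      (∀ S T, S.val ≤ T.val → F S ≤ F T) ∧
      (∀ S T, F S ≤ F T → S.val ≤ T.val) := by
  rintro ⟨F, hmono, hsep⟩
  obtain e := Infinite.natEmbedding V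
  -- singletons
  have hcard1 : ∀ n : ℕ, Multiset.card ({e n} : Multiset V) ≤ k := by
    intro n; simp; omega
  set x : ℕ → Fin m → ℝ := fun n => F ⟨{e n}, hcard1 n⟩ with hx
  obtain ⟨g, hg, hgm⟩ := stmt6_aux m x
  -- three elements
  set a := e (g 0)
  set b := e (g 1)
  set d := e (g 2)
  have hab : a ≠ b := fun h => by
    have := e.injective h
    exact absurd (hg.injective this) (by omega)
  have hbd : b ≠ d := fun h => by
    have := e.injective h
    exact absurd (hg.injective this) (by omega)
  have hT : Multiset.card ({a, d} : Multiset V) ≤ k := by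
    simp only [Multiset.insert_eq_cons, Multiset.card_cons, Multiset.card_singleton]; omega
  set T : {S : Multiset V // Multiset.card S ≤ k} := ⟨{a, d}, hT⟩
  -- {b} is not a sub-multiset of {a, d}
  have hnle : ¬ (({b} : Multiset V) ≤ ({a, d} : Multiset V)) := by
    rw [Multiset.singleton_le]
    simp only [Multiset.insert_eq_cons, Multiset.mem_cons, Multiset.mem_singleton]
    rintro (h | h)
    · exact hab h.symm
    · exact hbd h
  have hnF : ¬ (x (g 1) ≤ F T) := fun h => hnle (hsep _ T h)
  rw [Pi.le_def] at hnF
  push_neg at hnF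
  obtain ⟨t, ht⟩ := hnF
  -- monotonicity consequences
  have ha : x (g 0) t ≤ F T t := by
    refine (hmono ⟨{a}, hcard1 _⟩ T ?_) t
    exact Multiset.singleton_le.2 (by simp [T])
  have hd : x (g 2) t ≤ F T t := by
    refine (hmono ⟨{d}, hcard1 _⟩ T ?_) t
    exact Multiset.singleton_le.2 (by simp [T])
  rcases hgm t with h | h
  · exact absurd (h 1 2 (by omega)) (by push_neg; exact lt_of_le_of_lt hd ht)
  · exact absurd (h 0 1 (by omega)) (by push_neg; exact lt_of_le_of_lt ha ht)
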